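/- Let h : ℝⁿ → ℝ be L_h-Lipschitz, f : ℝⁿ → ℝⁿ be L_f-Lipschitz, α ∈ [0,1], ᾱ ∈ [α,1], δ ≥ 0, and γ ≤ 0. Suppose x̄ ∈ ℝⁿ satisfies h(x̄) ≤ γ and h(f(x̄)) - h(x̄) ≤ -α·h(x̄) - δ, and x ∈ ℝⁿ satisfies ‖x - x̄‖ ≤ ε with ε = (δ + (ᾱ-α)(-γ))/(L_h·L_f + (1-ᾱ)·L_h). Then h(f(x)) ≤ (1-ᾱ)·(L_h·L_f + (1-α)·L_h)/(L_h·L_f + (1-ᾱ)·L_h) · γ + ((ᾱ-1)·L_h)/(L_h·L_f + (1-ᾱ)·L_h) · δ. -/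

import Mathlib

/-- Single-step level propagation bound for a sampled point xb near x. -/
theorem stmt_8 (n : ℕ)
    (h : EuclideanSpace ℝ (Fin n) → ℝ)
    (f : EuclideanSpace ℝ (Fin n) → EuclideanSpace ℝ (Fin n))
    (Lh Lf : ℝ) (hLh : 0 < Lh) (hLf : 0 < Lf)
    (hLiph : ∀ x y, |h x - h y| ≤ Lh * ‖x - y‖)
    (hLipf : ∀ x y, ‖f x - f y‖ ≤ Lf * ‖x - y‖)
    (α αb δ γ : ℝ)
    (hα : 0 ≤ α) (hα1 : α ≤ 1) (hααb : α ≤ αb) (hαb1 : αb ≤ 1)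
    (hδ : 0 ≤ δ) (hγ : γ ≤ 0)
    (x xb : EuclideanSpace ℝ (Fin n))
    (hlev : h xb ≤ γ)
    (hdec : h (f xb) - h xb ≤ -α * h xb - δ)
    (hclose : ‖x - xb‖ ≤ (δ + (αb - α) * (-γ)) / (Lh * Lf + (1 - αb) * Lh)) :
    h (f x) ≤ (1 - αb) * (Lh * Lf + (1 - α) * Lh) / (Lh * Lf + (1 - αb) * Lh) * γ +
      ((αb - 1) * Lh) / (Lh * Lf + (1 - αb) * Lh) * δ := by
  have hD : 0 < Lh * Lf + (1 - αb) * Lh := by nlinarith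
  set ε : ℝ := (δ + (αb - α) * (-γ)) / (Lh * Lf + (1 - αb) * Lh) with hε
  -- Lipschitz step
  have h1 : h (f x) - h (f xb) ≤ Lh * ‖f x - f xb‖ :=
    le_trans (le_abs_self _) (hLiph _ _)
  have h2 : Lh * ‖f x - f xb‖ ≤ Lh * (Lf * ‖x - xb‖) :=
    mul_le_mul_of_nonneg_left (hLipf _ _) hLh.le
  have h3 : Lh * (Lf * ‖x - xb‖) ≤ Lh * Lf * ε := by
    rw [← mul_assoc]
    exact mul_le_mul_of_nonneg_left hclose (by positivity)
  -- decay + level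
  have h4 : h (f xb) ≤ (1 - α) * γ - δ := by nlinarith
  have h5 : h (f x) ≤ (1 - α) * γ - δ + Lh * Lf * ε := by linarith
  have heq : (1 - αb) * (Lh * Lf + (1 - α) * Lh) / (Lh * Lf + (1 - αb) * Lh) * γ +
      ((αb - 1) * Lh) / (Lh * Lf + (1 - αb) * Lh) * δ
      = (1 - α) * γ - δ + Lh * Lf * ε := by
    rw [hε]
    linear_combination ((1 - α) * γ - δ) * mul_inv_cancel₀ hD.ne'
  linarith [heq ▸ h5]
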